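/- Let L be a Hermitian d×d complex matrix which is not a scalar multiple of the identity. Then the rank of the adjoint map ad_L : M ↦ LM − ML on d×d matrices is at least 2(d−1). -/

import Mathlib

open Matrix Finset
lemma aux_card (d : ℕ) (ev : Fin d → ℝ) (i0 j0 : Fin d) (hne : ev i0 ≠ ev j0) :
    2 * (d - 1) ≤ (Finset.univ.filter (fun p : Fin d × Fin d => ev p.1 ≠ ev p.2)).card := by
  classical
  set S := Finset.univ.filter (fun p : Fin d × Fin d => ev p.1 ≠ ev p.2) with hS
  set f : Fin d → Fin d × Fin d := fun k => ((if ev k = ev i0 then j0 else i0), k) with hf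
  set g : Fin d → Fin d × Fin d := fun k => (k, (if ev k = ev i0 then j0 else i0)) with hg
  have hfinj : Function.Injective f := fun a b h => congrArg Prod.snd h
  have hginj : Function.Injective g := fun a b h => congrArg Prod.fst h
  have hfS : ∀ k, f k ∈ S := by
    intro k
    simp only [hS, Finset.mem_filter, Finset.mem_univ, true_and, hf]
    split_ifs with h
    · simpa [h] using fun hh => hne hh.symm
    · exact fun hh => h hh.symm
  have hgS : ∀ k, g k ∈ S := by
    intro k
    simp only [hS, Finset.mem_filter, Finset.mem_univ, true_and, hg]
    split_ifs with h
    · simpa [h] using hne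
    · exact h
  have hsub : (Finset.univ.image f) ∪ (Finset.univ.image g) ⊆ S := by
    intro p hp
    rcases Finset.mem_union.1 hp with hp | hp <;>
      · obtain ⟨k, _, rfl⟩ := Finset.mem_image.1 hp
        first | exact hfS k | exact hgS k
  have hinter : (Finset.univ.image f) ∩ (Finset.univ.image g) ⊆ {(j0, i0), (i0, j0)} := by
    intro p hp
    obtain ⟨hp1, hp2⟩ := Finset.mem_inter.1 hp
    obtain ⟨k, _, rfl⟩ := Finset.mem_image.1 hp1
    obtain ⟨k', _, hk'⟩ := Finset.mem_image.1 hp2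
    have h2 : (f k).2 = k := rfl
    have hk : k = (if ev k' = ev i0 then j0 else i0) := by
      rw [← h2, ← hk']
    have hkor : k = j0 ∨ k = i0 := by
      by_cases h : ev k' = ev i0
      · left; rwa [if_pos h] at hk
      · right; rwa [if_neg h] at hk
    simp only [Finset.mem_insert, Finset.mem_singleton]
    rcases hkor with hk0 | hk0
    · right
      have hx : ¬ ev k = ev i0 := by rw [hk0]; exact fun hh => hne hh.symm
      simp only [hf]
      rw [if_neg hx, hk0]
    · left
      have hx : ev k = ev i0 := by rw [hk0]
      simp only [hf]
      rw [if_pos hx, hk0]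
  have h1 : (Finset.univ.image f).card = d := by
    rw [Finset.card_image_of_injective _ hfinj, Finset.card_univ, Fintype.card_fin]
  have h2 : (Finset.univ.image g).card = d := by
    rw [Finset.card_image_of_injective _ hginj, Finset.card_univ, Fintype.card_fin]
  have hd : 1 ≤ d := i0.pos
  have key := Finset.card_union_add_card_inter (Finset.univ.image f) (Finset.univ.image g)
  have hile : ((Finset.univ.image f) ∩ (Finset.univ.image g)).card ≤ 2 := by
    calc _ ≤ ({(j0, i0), (i0, j0)} : Finset (Fin d × Fin d)).card := Finset.card_le_card hinter
    _ ≤ 2 := Finset.card_insert_le _ _ |>.trans (by simp)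
  have hcard := Finset.card_le_card hsub
  omega

lemma aux_rank (d : ℕ) (μ : Fin d → ℂ) :
    ((Finset.univ.filter (fun p : Fin d × Fin d => μ p.1 ≠ μ p.2)).card : ℕ) ≤
      Module.finrank ℂ (LinearMap.range
        (LinearMap.mulLeft ℂ (diagonal μ) - LinearMap.mulRight ℂ (diagonal μ))) := by
  classical
  set f := LinearMap.mulLeft ℂ (diagonal μ) - LinearMap.mulRight ℂ (diagonal μ) with hfdef
  set S := Finset.univ.filter (fun p : Fin d × Fin d => μ p.1 ≠ μ p.2) with hSdef
  have hmem : ∀ p : Fin d × Fin d, p ∈ S → Matrix.single p.1 p.2 (1:ℂ) ∈ LinearMap.range f := by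
    intro p hp
    have hp' : μ p.1 ≠ μ p.2 := (Finset.mem_filter.1 hp).2
    refine ⟨Matrix.single p.1 p.2 ((μ p.1 - μ p.2)⁻¹), ?_⟩
    ext a b
    simp only [hfdef, LinearMap.sub_apply, LinearMap.mulLeft_apply, LinearMap.mulRight_apply,
      Matrix.sub_apply, diagonal_mul, mul_diagonal, Matrix.single, of_apply]
    split_ifs with h
    · obtain ⟨h1, h2⟩ := h
      subst h1; subst h2
      have hz : μ p.1 - μ p.2 ≠ 0 := sub_ne_zero.2 hp'
      field_simp
    · ring
  have hbasis : ∀ p : Fin d × Fin d,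
      Matrix.stdBasis ℂ (Fin d) (Fin d) p = Matrix.single p.1 p.2 (1:ℂ) := by
    intro p
    rw [← Prod.mk.eta (p := p), Matrix.stdBasis_eq_single]
  have li0 : LinearIndependent ℂ
      (fun p : S => Matrix.stdBasis ℂ (Fin d) (Fin d) (p : Fin d × Fin d)) :=
    (Matrix.stdBasis ℂ (Fin d) (Fin d)).linearIndependent.comp _ Subtype.val_injective
  have li : LinearIndependent ℂ
      (fun p : S => Matrix.single (p : Fin d × Fin d).1 (p : Fin d × Fin d).2 (1:ℂ)) := by
    simpa only [hbasis] using li0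
  set v : S → LinearMap.range f :=
    fun p => ⟨Matrix.single (p : Fin d × Fin d).1 (p : Fin d × Fin d).2 (1:ℂ), hmem p p.2⟩
    with hv
  have liv : LinearIndependent ℂ v :=
    LinearIndependent.of_comp ((LinearMap.range f).subtype) li
  have := liv.fintype_card_le_finrank
  simpa [Fintype.card_coe] using this

theorem stmt9 (d : ℕ) (L : Matrix (Fin d) (Fin d) ℂ) (hherm : L.IsHermitian)
    (hns : ∀ c : ℂ, L ≠ c • (1 : Matrix (Fin d) (Fin d) ℂ)) :
    2 * (d - 1) ≤ Module.finrank ℂ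
      (LinearMap.range (LinearMap.mulLeft ℂ L - LinearMap.mulRight ℂ L)) := by
  classical
  set U : Matrix (Fin d) (Fin d) ℂ := (hherm.eigenvectorUnitary : Matrix (Fin d) (Fin d) ℂ)
    with hUdef
  have hU2 : U * star U = 1 := mem_unitaryGroup_iff.mp (hherm.eigenvectorUnitary).2
  have hU1 : star U * U = 1 := mem_unitaryGroup_iff'.mp (hherm.eigenvectorUnitary).2
  set μ : Fin d → ℂ := RCLike.ofReal ∘ hherm.eigenvalues with hμdef
  have hdiag : star U * L * U = diagonal μ := by
    have := hherm.conjStarAlgAut_star_eigenvectorUnitary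
    rwa [Unitary.conjStarAlgAut_star_apply] at this
  have hspec : L = U * diagonal μ * star U := hherm.spectral_theorem
  -- eigenvalues are not constant
  have hnc : ∃ i j : Fin d, hherm.eigenvalues i ≠ hherm.eigenvalues j := by
    by_contra h
    push_neg at h
    rcases Nat.eq_zero_or_pos d with hd | hd
    · subst hd
      exact hns 0 (Subsingleton.elim _ _)
    · have i0 : Fin d := ⟨0, hd⟩
      have hconst : diagonal μ = (μ i0) • (1 : Matrix (Fin d) (Fin d) ℂ) := by
        ext a b
        by_cases hab : a = b
        · subst hab
          simp [diagonal_apply_eq, hμdef, h a i0]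
        · simp [diagonal_apply_ne _ hab, Matrix.one_apply_ne hab]
      refine hns (μ i0) ?_
      rw [hspec, hconst, Matrix.mul_smul, Matrix.smul_mul, Matrix.mul_one, hU2]
  obtain ⟨i0, j0, hij⟩ := hnc
  -- the conjugation linear equivalence
  have cancel1 : ∀ M : Matrix (Fin d) (Fin d) ℂ, star U * (U * M) = M := fun M => by
    rw [← Matrix.mul_assoc, hU1, Matrix.one_mul]
  have cancel2 : ∀ M : Matrix (Fin d) (Fin d) ℂ, U * (star U * M) = M := fun M => by
    rw [← Matrix.mul_assoc, hU2, Matrix.one_mul]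
  set e : Matrix (Fin d) (Fin d) ℂ ≃ₗ[ℂ] Matrix (Fin d) (Fin d) ℂ :=
    LinearEquiv.ofLinear
      ((LinearMap.mulRight ℂ U).comp (LinearMap.mulLeft ℂ (star U)))
      ((LinearMap.mulRight ℂ (star U)).comp (LinearMap.mulLeft ℂ U))
      (by
        apply LinearMap.ext
        intro M
        simp only [LinearMap.coe_comp, Function.comp_apply, LinearMap.mulLeft_apply,
          LinearMap.mulRight_apply, LinearMap.id_coe, id_eq]
        rw [Matrix.mul_assoc U M (star U), cancel1, Matrix.mul_assoc, hU1, Matrix.mul_one])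
      (by
        apply LinearMap.ext
        intro M
        simp only [LinearMap.coe_comp, Function.comp_apply, LinearMap.mulLeft_apply,
          LinearMap.mulRight_apply, LinearMap.id_coe, id_eq]
        rw [Matrix.mul_assoc (star U) M U, cancel2, Matrix.mul_assoc, hU2, Matrix.mul_one])
    with hedef
  have mulprod : ∀ X Y : Matrix (Fin d) (Fin d) ℂ,
      (star U * X * U) * (star U * Y * U) = star U * (X * Y) * U := fun X Y => by
    simp only [Matrix.mul_assoc, cancel2]
  set adL := LinearMap.mulLeft ℂ L - LinearMap.mulRight ℂ L with hadL
  set adD := LinearMap.mulLeft ℂ (diagonal μ) - LinearMap.mulRight ℂ (diagonal μ) with hadD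
  have hcomm : adD.comp e.toLinearMap = e.toLinearMap.comp adL := by
    apply LinearMap.ext
    intro M
    show adD (star U * M * U) = star U * (adL M) * U
    simp only [hadL, hadD, LinearMap.sub_apply, LinearMap.mulLeft_apply,
      LinearMap.mulRight_apply]
    rw [← hdiag, mulprod, mulprod, Matrix.mul_sub, Matrix.sub_mul]
  have hr1 : LinearMap.range adD = Submodule.map e.toLinearMap (LinearMap.range adL) := by
    rw [← LinearMap.range_comp, ← hcomm,
      LinearMap.range_comp_of_range_eq_top _ (LinearEquiv.range e)]
  have hset : (Finset.univ.filter
        (fun p : Fin d × Fin d => hherm.eigenvalues p.1 ≠ hherm.eigenvalues p.2))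
      = Finset.univ.filter (fun p : Fin d × Fin d => μ p.1 ≠ μ p.2) := by
    apply Finset.ext
    intro p
    simp [hμdef]
  calc 2 * (d - 1)
      ≤ (Finset.univ.filter
        (fun p : Fin d × Fin d => hherm.eigenvalues p.1 ≠ hherm.eigenvalues p.2)).card :=
        aux_card d hherm.eigenvalues i0 j0 hij
    _ = (Finset.univ.filter (fun p : Fin d × Fin d => μ p.1 ≠ μ p.2)).card := by rw [hset]
    _ ≤ Module.finrank ℂ (LinearMap.range adD) := aux_rank d μ
    _ = Module.finrank ℂ (LinearMap.range adL) := by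
        rw [hr1, LinearEquiv.finrank_map_eq]
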